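/- Every module-composed graph is HHD-free, i.e. contains no induced house, no induced hole (chordless cycle of length ≥ 5), and no induced domino. -/

import Mathlib

open scoped Classical

/-- `M` is a module (homogeneous set) of `G`: every two vertices of `M`
have the same neighbours outside `M`. -/
def SimpleGraph.IsModule {V : Type*} (G : SimpleGraph V) (M : Set V) : Prop :=
  ∀ v₁ ∈ M, ∀ v₂ ∈ M, ∀ w ∉ M, (G.Adj v₁ w ↔ G.Adj v₂ w)

/-- `G` is module-composed: there is a linear ordering `v₀, …, v_{n-1}` of the
vertices such that for every `i ≥ 1` the neighbourhood of `vᵢ` inside the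
induced subgraph on `{v₀, …, v_{i-1}}` is a module of that induced subgraph. -/
def SimpleGraph.ModuleComposed {V : Type*} [Fintype V] (G : SimpleGraph V) : Prop :=
  ∃ e : Fin (Fintype.card V) ≃ V,
    ∀ i : Fin (Fintype.card V), 0 < (i : ℕ) →
      (G.induce {v | ∃ j, j < i ∧ e j = v}).IsModule
        {w : {v | ∃ j, j < i ∧ e j = v} | G.Adj (e i) ↑w}


/-- The house graph: a 5-cycle with one chord between two vertices at
distance two on the cycle. -/
def house : SimpleGraph (Fin 5) :=
  SimpleGraph.fromRel (fun a b =>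
    (a, b) ∈ [((0 : Fin 5), (1 : Fin 5)), (1, 2), (2, 3), (3, 4), (4, 0), (1, 4)])

/-- The domino graph: a 6-cycle with one chord joining opposite vertices. -/
def domino : SimpleGraph (Fin 6) :=
  SimpleGraph.fromRel (fun a b =>
    (a, b) ∈ [((0 : Fin 6), (1 : Fin 6)), (1, 2), (2, 3), (3, 4), (4, 5), (5, 0), (0, 3)])

/- ### Auxiliary material -/

instance : DecidableRel house.Adj := fun a b =>
  decidable_of_iff _ (SimpleGraph.fromRel_adj _ a b).symm

instance : DecidableRel domino.Adj := fun a b =>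
  decidable_of_iff _ (SimpleGraph.fromRel_adj _ a b).symm

/-- Key structural lemma: if `H` embeds as an induced subgraph into a
module-composed graph `G`, then some vertex `x` of `H` has the property that
its neighbourhood is a module of `H - x`. -/
lemma moduleComposed_key {V W : Type*} [Fintype V] [Fintype W]
    {G : SimpleGraph V} {H : SimpleGraph W}
    (hG : G.ModuleComposed) (f : H ↪g G) (hW : ∃ a b : W, a ≠ b) :
    ∃ x : W, ∀ y₁ y₂ w, H.Adj x y₁ → H.Adj x y₂ → ¬H.Adj x w → w ≠ x →
      (H.Adj y₁ w ↔ H.Adj y₂ w) := by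
  obtain ⟨e, he⟩ := hG
  set idx : W → Fin (Fintype.card V) := fun x => e.symm (f x) with hidx
  have hinj : Function.Injective idx := fun a b h => f.injective (e.symm.injective h)
  obtain ⟨a0, b0, hab⟩ := hW
  have : Nonempty W := ⟨a0⟩
  obtain ⟨x₀, -, hmax⟩ := Finset.exists_max_image Finset.univ idx ⟨a0, Finset.mem_univ a0⟩
  set i := idx x₀ with hi
  have hei : e i = f x₀ := e.apply_symm_apply _
  have hlt : ∀ y, y ≠ x₀ → idx y < i :=
    fun y hy => lt_of_le_of_ne (hmax y (Finset.mem_univ y)) (fun h => hy (hinj h))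
  have hpos : 0 < (i : ℕ) := by
    rcases eq_or_ne a0 x₀ with h | h
    · exact lt_of_le_of_lt (Nat.zero_le _) (hlt b0 (fun hb => hab (h.trans hb.symm)))
    · exact lt_of_le_of_lt (Nat.zero_le _) (hlt a0 h)
  have hm := he i hpos
  have hmem : ∀ y, y ≠ x₀ → f y ∈ {v | ∃ j, j < i ∧ e j = v} :=
    fun y hy => ⟨idx y, hlt y hy, e.apply_symm_apply _⟩
  refine ⟨x₀, fun y₁ y₂ w h1 h2 hw hwx => ?_⟩
  have hy₁ : y₁ ≠ x₀ := fun h => H.loopless.irrefl x₀ (h ▸ h1)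
  have hy₂ : y₂ ≠ x₀ := fun h => H.loopless.irrefl x₀ (h ▸ h2)
  have := hm ⟨f y₁, hmem y₁ hy₁⟩ (by simpa [hei] using f.map_adj_iff.mpr h1)
      ⟨f y₂, hmem y₂ hy₂⟩ (by simpa [hei] using f.map_adj_iff.mpr h2)
      ⟨f w, hmem w hwx⟩ (by simpa [hei] using fun h => hw (f.map_adj_iff.mp h))
  simpa [SimpleGraph.comap_adj, f.map_adj_iff] using this

/-- In the house, no vertex has its neighbourhood a module of the rest. -/
lemma house_bad : ∀ x : Fin 5, ∃ y₁ y₂ w, house.Adj x y₁ ∧ house.Adj x y₂ ∧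
    ¬house.Adj x w ∧ w ≠ x ∧ house.Adj y₁ w ∧ ¬house.Adj y₂ w := by decide

/-- In the domino, no vertex has its neighbourhood a module of the rest. -/
lemma domino_bad : ∀ x : Fin 6, ∃ y₁ y₂ w, domino.Adj x y₁ ∧ domino.Adj x y₂ ∧
    ¬domino.Adj x w ∧ w ≠ x ∧ domino.Adj y₁ w ∧ ¬domino.Adj y₂ w := by decide

open Fin.NatCast in
lemma fin_const_ne (m : ℕ) {a b : ℕ} (ha : a < m+5) (hb : b < m+5) (hab : a ≠ b) :
    (a : Fin (m+5)) ≠ (b : Fin (m+5)) := by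
  intro h
  have h2 := congrArg Fin.val h
  rw [Fin.coe_natCast_eq_mod, Fin.coe_natCast_eq_mod,
    Nat.mod_eq_of_lt ha, Nat.mod_eq_of_lt hb] at h2
  exact hab h2

open Fin.NatCast Fin.CommRing in
open SimpleGraph in
/-- In a hole, no vertex has its neighbourhood a module of the rest. -/
lemma cycle_bad (m : ℕ) : ∀ x : Fin (m+5), ∃ y₁ y₂ w,
    (cycleGraph (m+5)).Adj x y₁ ∧ (cycleGraph (m+5)).Adj x y₂ ∧
    ¬(cycleGraph (m+5)).Adj x w ∧ w ≠ x ∧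
    (cycleGraph (m+5)).Adj y₁ w ∧ ¬(cycleGraph (m+5)).Adj y₂ w := by
  intro x
  have h21 : (2 : Fin (m+5)) ≠ 1 := by
    simpa using fin_const_ne m (a := 2) (b := 1) (by omega) (by omega) (by omega)
  have h20 : (2 : Fin (m+5)) ≠ 0 := by
    simpa using fin_const_ne m (a := 2) (b := 0) (by omega) (by omega) (by omega)
  have h30 : (3 : Fin (m+5)) ≠ 0 := by
    simpa using fin_const_ne m (a := 3) (b := 0) (by omega) (by omega) (by omega)
  have h31 : (3 : Fin (m+5)) ≠ 1 := by
    simpa using fin_const_ne m (a := 3) (b := 1) (by omega) (by omega) (by omega)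
  have h40 : (4 : Fin (m+5)) ≠ 0 := by
    simpa using fin_const_ne m (a := 4) (b := 0) (by omega) (by omega) (by omega)
  have hadj : ∀ u v : Fin (m+5), (cycleGraph (m+5)).Adj u v ↔
      u - v = 1 ∨ v - u = 1 := fun u v => SimpleGraph.cycleGraph_adj (n := m+3)
  refine ⟨x+1, x-1, x+2, ?_, ?_, ?_, ?_, ?_, ?_⟩
  · rw [hadj]; right; rw [add_sub_cancel_left]
  · rw [hadj]; left; rw [sub_sub_cancel]
  · rw [hadj]; push_neg
    refine ⟨fun h => h30 (by linear_combination -h), fun h => ?_⟩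
    rw [add_sub_cancel_left] at h; exact h21 h
  · intro h
    exact h20 (by linear_combination h)
  · rw [hadj]; right
    have : (x+2) - (x+1) = 1 := by ring
    rw [this]
  · rw [hadj]; push_neg
    exact ⟨fun h => h40 (by linear_combination -h), fun h => h31 (by linear_combination h)⟩

/-- Every module-composed graph is HHD-free: it contains no induced house,
no induced hole (chordless cycle on at least 5 vertices), and no induced
domino. -/
theorem moduleComposed_HHD_free {V : Type*} [Fintype V] (G : SimpleGraph V)
    (hG : G.ModuleComposed) :
    (¬ ∃ _f : house ↪g G, True) ∧
    (∀ n, 5 ≤ n → ¬ ∃ _f : SimpleGraph.cycleGraph n ↪g G, True) ∧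
    (¬ ∃ _f : domino ↪g G, True) := by
  refine ⟨?_, ?_, ?_⟩
  · rintro ⟨f, -⟩
    obtain ⟨x, hx⟩ := moduleComposed_key hG f ⟨0, 1, by decide⟩
    obtain ⟨y₁, y₂, w, a1, a2, a3, a4, a5, a6⟩ := house_bad x
    exact a6 ((hx y₁ y₂ w a1 a2 a3 a4).mp a5)
  · intro n hn
    obtain ⟨m, rfl⟩ : ∃ m, n = m + 5 := ⟨n - 5, by omega⟩
    rintro ⟨f, -⟩
    obtain ⟨x, hx⟩ := moduleComposed_key hG f
      ⟨0, 1, by simpa using (fin_const_ne m (a := 0) (b := 1)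
        (by omega) (by omega) (by omega))⟩
    obtain ⟨y₁, y₂, w, a1, a2, a3, a4, a5, a6⟩ := cycle_bad m x
    exact a6 ((hx y₁ y₂ w a1 a2 a3 a4).mp a5)
  · rintro ⟨f, -⟩
    obtain ⟨x, hx⟩ := moduleComposed_key hG f ⟨0, 1, by decide⟩
    obtain ⟨y₁, y₂, w, a1, a2, a3, a4, a5, a6⟩ := domino_bad x
    exact a6 ((hx y₁ y₂ w a1 a2 a3 a4).mp a5)
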